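/- Let p be prime and α a totally p-adic algebraic unit. If T ∈ ℤ[x] satisfies T(α^{p−1}) ≠ 0, then h(α) ≥ (ω_p(T) − ν_∞(T)) / ((p−1)·deg T), where ω_p(T) = log gcd{p^k T^{(k)}(1)/k! : 0 ≤ k ≤ deg T} and ν_∞(T) = log sup{|T(z)| : z ∈ ℂ, |z| = 1}. -/

import Mathlib

open NumberField IsDedekindDomain Polynomial
open scoped Classical

variable {K : Type*} [Field K] [NumberField K]

/-- The normalized absolute value attached to a finite place `v` of the number field `K`:
`|x|_v = N(v)^{-ord_v(x)}`, where `N(v)` is the absolute norm of the prime ideal. -/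
noncomputable def padicAbs (v : HeightOneSpectrum (𝓞 K)) (x : K) : ℝ :=
  if hx : x = 0 then 0
  else (Ideal.absNorm v.asIdeal : ℝ) ^
    (Multiplicative.toAdd (WithZero.unzero (((v.valuation K).ne_zero_iff).mpr hx)) : ℤ)

/-- The absolute logarithmic Weil height of an element of a number field, written as the
sum over all (infinite and finite) places of `log⁺` of the normalized absolute values. -/
noncomputable def weilHeight (x : K) : ℝ :=
  (1 / (Module.finrank ℚ K : ℝ)) *
    ((∑ w : InfinitePlace K, (w.mult : ℝ) * Real.log (max 1 (w x))) +
      ∑ᶠ v : HeightOneSpectrum (𝓞 K), Real.log (max 1 (padicAbs v x)))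

/-- The Archimedean part `ν_∞(T) = Σ_{v∣∞} ν_v(T)` of the sup norm of `T ∈ K[x]` on unit
circles, with the normalized absolute values. -/
noncomputable def nuInfty (T : Polynomial K) : ℝ :=
  (1 / (Module.finrank ℚ K : ℝ)) *
    ∑ w : InfinitePlace K, (w.mult : ℝ) *
      Real.log (sSup ((fun z => ‖(T.map w.embedding).eval z‖) ''
        {z : ℂ | ‖z‖ = 1}))

/-- The logarithmic supremum norm of a complex polynomial on the unit circle. -/
noncomputable def nuC (T : Polynomial ℂ) : ℝ :=
  Real.log (sSup ((fun z => ‖T.eval z‖) '' {z : ℂ | ‖z‖ = 1}))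

/-- `ω_p(T) = log gcd{p^k T^{(k)}(1)/k! : 0 ≤ k ≤ deg T}`; note that
`T^{(k)}(1)/k!` is the `k`-th coefficient of the Taylor expansion of `T` at `1`. -/
noncomputable def omegap (p : ℕ) (T : Polynomial ℤ) : ℝ :=
  Real.log (((Finset.range (T.natDegree + 1)).gcd
    (fun k => (p : ℤ) ^ k * ((Polynomial.taylor 1 T).coeff k)) : ℤ) : ℝ)

open Polynomial

/-- Reverse evaluation identity. -/
lemma reverse_eval_aux (Q : Polynomial ℂ) {z : ℂ} (hz : z ≠ 0) :
    Q.reverse.eval z⁻¹ * z ^ Q.natDegree = Q.eval z := by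
  letI := invertibleOfNonzero hz
  have h := Polynomial.eval₂_reflect_mul_pow (RingHom.id ℂ) z Q.natDegree Q le_rfl
  rw [invOf_eq_inv] at h
  exact h

/-- Max modulus for polynomials on the closed unit disk. -/
lemma poly_disk_bound (Q : Polynomial ℂ) {S : ℝ}
    (hub : ∀ w : ℂ, ‖w‖ = 1 → ‖Q.eval w‖ ≤ S)
    {z : ℂ} (hz : ‖z‖ ≤ 1) : ‖Q.eval z‖ ≤ S := by
  have hd : DiffContOnCl ℂ (fun w => Q.eval w) (Metric.ball (0:ℂ) 1) :=
    (Q.differentiable).diffContOnCl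
  have hC : ∀ w ∈ frontier (Metric.ball (0:ℂ) 1), ‖Q.eval w‖ ≤ S := by
    intro w hw
    rw [frontier_ball (0:ℂ) one_ne_zero] at hw
    have : ‖w‖ = 1 := by simpa [Complex.dist_eq] using hw
    simpa using hub w this
  have hcl : z ∈ closure (Metric.ball (0:ℂ) 1) := by
    rw [closure_ball (0:ℂ) one_ne_zero]
    simpa [Complex.dist_eq] using hz
  simpa using
    Complex.norm_le_of_forall_mem_frontier_norm_le Metric.isBounded_ball hd hC hcl

lemma poly_global_bound (Q : Polynomial ℂ) {S : ℝ}
    (hub : ∀ w : ℂ, ‖w‖ = 1 → ‖Q.eval w‖ ≤ S)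
    (z : ℂ) : ‖Q.eval z‖ ≤ S * max 1 (‖z‖) ^ Q.natDegree := by
  have hS : 0 ≤ S := le_trans (norm_nonneg _) (hub 1 (by simp))
  rcases le_or_gt (‖z‖) 1 with h | h
  · have := poly_disk_bound Q hub h
    have h1 : (1:ℝ) ≤ max 1 (‖z‖) ^ Q.natDegree :=
      one_le_pow₀ (le_max_left _ _)
    nlinarith
  · have hz : z ≠ 0 := by
      intro h0; rw [h0] at h; simp at h; linarith
    have hub' : ∀ w : ℂ, ‖w‖ = 1 → ‖Q.reverse.eval w‖ ≤ S := by
      intro w hw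
      have hw0 : w ≠ 0 := by intro h0; rw [h0] at hw; simp at hw
      have hwi : ‖w⁻¹‖ = 1 := by rw [norm_inv, hw]; norm_num
      have hrev := reverse_eval_aux Q (inv_ne_zero hw0)
      rw [inv_inv] at hrev
      have : ‖Q.reverse.eval w‖ * ‖w⁻¹‖ ^ Q.natDegree
          = ‖Q.eval w⁻¹‖ := by
        rw [← norm_pow, ← norm_mul, hrev]
      rw [hwi, one_pow, mul_one] at this
      rw [this]; exact hub _ hwi
    have hzi : ‖z⁻¹‖ ≤ 1 := by
      rw [norm_inv]
      exact inv_le_one_of_one_le₀ h.le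
    have hb := poly_disk_bound Q.reverse hub' hzi
    have hrev := reverse_eval_aux Q hz
    calc ‖Q.eval z‖
        = ‖Q.reverse.eval z⁻¹‖ * ‖z‖ ^ Q.natDegree := by
          rw [← norm_pow, ← norm_mul, hrev]
      _ ≤ S * max 1 (‖z‖) ^ Q.natDegree := by
          apply mul_le_mul hb (pow_le_pow_left₀ (norm_nonneg _) (le_max_right _ _) _)
            (pow_nonneg (norm_nonneg _) _) hS


attribute [local instance] Ideal.Quotient.field in
set_option synthInstance.maxHeartbeats 1000000 in
set_option maxHeartbeats 1000000 in
lemma cong_lemma (p : ℕ) (hp : p.Prime) (α : 𝓞 K) (hunit : IsUnit α)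
    (v : HeightOneSpectrum (𝓞 K)) (hN : Ideal.absNorm v.asIdeal = p) :
    α ^ (p - 1) - 1 ∈ v.asIdeal := by
  haveI hmax : v.asIdeal.IsMaximal := v.isPrime.isMaximal v.ne_bot
  have hcard : Nat.card ((𝓞 K) ⧸ v.asIdeal) = p := by
    rw [← hN, Ideal.absNorm_apply, Submodule.cardQuot_apply]
  haveI : Finite ((𝓞 K) ⧸ v.asIdeal) := Nat.finite_of_card_ne_zero (by
    rw [hcard]; exact hp.ne_zero)
  haveI : Fintype ((𝓞 K) ⧸ v.asIdeal) := Fintype.ofFinite _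
  have hcard' : Fintype.card ((𝓞 K) ⧸ v.asIdeal) = p := by
    rw [← Nat.card_eq_fintype_card, hcard]
  set a := Ideal.Quotient.mk v.asIdeal α with ha
  have ha0 : a ≠ 0 := IsUnit.ne_zero (hunit.map (Ideal.Quotient.mk v.asIdeal))
  have := FiniteField.pow_card_sub_one_eq_one a ha0
  rw [hcard'] at this
  have : (Ideal.Quotient.mk v.asIdeal) (α ^ (p - 1) - 1) = 0 := by
    rw [map_sub, map_pow, map_one, ← ha, this, sub_self]
  exact (Ideal.Quotient.eq_zero_iff_mem).mp this

lemma p_dvd_lemma (p : ℕ) (hp : p.Prime) (α : 𝓞 K) (hunit : IsUnit α)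
    (hsplit : ∀ v : HeightOneSpectrum (𝓞 K), v.asIdeal ∣ Ideal.span {(p : 𝓞 K)} →
      Ideal.absNorm v.asIdeal = p ∧ ¬ (v.asIdeal ^ 2 ∣ Ideal.span {(p : 𝓞 K)})) :
    (p : 𝓞 K) ∣ α ^ (p - 1) - 1 := by
  set I : Ideal (𝓞 K) := Ideal.span {(p : 𝓞 K)} with hI
  have hp0 : (p : 𝓞 K) ≠ 0 := Nat.cast_ne_zero.mpr hp.ne_zero
  have hI0 : I ≠ 0 := by
    simpa [hI, Ideal.span_singleton_eq_bot] using hp0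
  set M := UniqueFactorizationMonoid.normalizedFactors I with hM
  have hprodM : M.prod = I :=
    associated_iff_eq.mp (UniqueFactorizationMonoid.prod_normalizedFactors hI0)
  -- each factor is prime and divides span {β - 1}
  have hmemprime : ∀ a ∈ M, Prime a := fun a ha =>
    UniqueFactorizationMonoid.prime_of_normalized_factor a ha
  have hnodup : M.Nodup := by
    rw [Multiset.nodup_iff_count_le_one]
    intro a
    by_contra hcount
    push_neg at hcount
    have hcount2 : 2 ≤ M.count a := hcount
    have hrep : Multiset.replicate 2 a ≤ M := Multiset.le_iff_count.mpr (by
      intro b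
      rcases eq_or_ne b a with rfl | hb
      · simpa using hcount2
      · simp [Multiset.count_replicate, hb])
    have hsq : a ^ 2 ∣ I := by
      rw [← hprodM]
      have := Multiset.prod_dvd_prod_of_le hrep
      simpa [Multiset.prod_replicate, sq] using this
    have haM : a ∈ M := by
      have : 0 < M.count a := by omega
      exact Multiset.count_pos.mp this
    have hap : Prime a := hmemprime a haM
    have hane : a ≠ ⊥ := hap.ne_zero
    have haprime : a.IsPrime := Ideal.isPrime_of_prime hap
    have haI : a ∣ I := UniqueFactorizationMonoid.dvd_of_mem_normalizedFactors haM
    exact (hsplit ⟨a, haprime, hane⟩ haI).2 hsq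
  have hdvd : I ∣ Ideal.span {α ^ (p - 1) - 1} := by
    rw [← hprodM]
    refine Multiset.prod_primes_dvd _ hmemprime ?_ ?_
    · intro a haM
      have hap := hmemprime a haM
      have haprime : a.IsPrime := Ideal.isPrime_of_prime hap
      have hane : a ≠ ⊥ := hap.ne_zero
      have haI : a ∣ I := UniqueFactorizationMonoid.dvd_of_mem_normalizedFactors haM
      have hmem := cong_lemma p hp α hunit ⟨a, haprime, hane⟩
        (hsplit ⟨a, haprime, hane⟩ haI).1
      rw [Ideal.dvd_iff_le, Ideal.span_le]
      simpa using hmem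
    · intro a
      have heq : (Associated a) = (a = ·) := by
        funext b; exact propext associated_iff_eq
      have := Multiset.nodup_iff_count_le_one.mp hnodup a
      simpa [Multiset.count, heq] using this
  have hle := Ideal.le_of_dvd hdvd
  have : α ^ (p - 1) - 1 ∈ I := hle (Ideal.mem_span_singleton_self _)
  rwa [hI, Ideal.mem_span_singleton] at this


lemma unit_valuation_one (α : 𝓞 K) (hunit : IsUnit α) (v : HeightOneSpectrum (𝓞 K)) :
    v.valuation K (algebraMap (𝓞 K) K α) = 1 := by
  rw [v.valuation_of_algebraMap]
  obtain ⟨u, rfl⟩ := hunit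
  have h1 : v.intValuation (u : 𝓞 K) * v.intValuation ((u⁻¹ : (𝓞 K)ˣ) : 𝓞 K) = 1 := by
    rw [← map_mul]
    simp only [Units.mul_inv]
    exact v.intValuation.map_one'
  have ha : v.intValuation (u : 𝓞 K) ≤ 1 := v.intValuation_le_one _
  have hb : v.intValuation ((u⁻¹ : (𝓞 K)ˣ) : 𝓞 K) ≤ 1 := v.intValuation_le_one _
  refine le_antisymm ha ?_
  calc (1 : WithZero (Multiplicative ℤ)) = v.intValuation (u : 𝓞 K) *
      v.intValuation ((u⁻¹ : (𝓞 K)ˣ) : 𝓞 K) := h1.symm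
    _ ≤ v.intValuation (u : 𝓞 K) * 1 := mul_le_mul_right hb _
    _ = v.intValuation (u : 𝓞 K) := mul_one _

lemma padicAbs_unit_eq_one (α : 𝓞 K) (hunit : IsUnit α) (v : HeightOneSpectrum (𝓞 K)) :
    padicAbs v (algebraMap (𝓞 K) K α) = 1 := by
  have hx : algebraMap (𝓞 K) K α ≠ 0 := by
    simpa using hunit.ne_zero
  rw [padicAbs, dif_neg hx]
  have hval := unit_valuation_one α hunit v
  have h1 : WithZero.unzero (((v.valuation K).ne_zero_iff).mpr hx) = 1 := by
    have := WithZero.coe_unzero (((v.valuation K).ne_zero_iff).mpr hx)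
    exact WithZero.coe_inj.mp (this.trans hval)
  simp only [h1]
  simp

lemma gcd_dvd_eval (p : ℕ) (T : Polynomial ℤ) (β : 𝓞 K) (hdvd : (p : 𝓞 K) ∣ β - 1) :
    ((((Finset.range (T.natDegree + 1)).gcd
        (fun k => (p : ℤ) ^ k * ((Polynomial.taylor 1 T).coeff k))) : ℤ) : 𝓞 K) ∣
      (T.map (Int.castRingHom (𝓞 K))).eval β := by
  obtain ⟨δ, hδ⟩ := hdvd
  set f := Int.castRingHom (𝓞 K) with hf
  set T' := T.map f with hT'
  have htay : Polynomial.taylor 1 T' = (Polynomial.taylor 1 T).map f := by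
    simp only [Polynomial.taylor_apply, hT', Polynomial.map_comp, Polynomial.map_add,
      Polynomial.map_X, Polynomial.map_C, map_one]
    norm_num
  have heval : T'.eval β = (Polynomial.taylor 1 T').eval (β - 1) := by
    rw [Polynomial.taylor_eval, sub_add_cancel]
  have hdeg : (Polynomial.taylor 1 T').natDegree < T.natDegree + 1 := by
    rw [Polynomial.natDegree_taylor]
    exact Nat.lt_succ_of_le (Polynomial.natDegree_map_le)
  rw [heval, Polynomial.eval_eq_sum_range' hdeg]
  apply Finset.dvd_sum
  intro k hk
  have hco : (Polynomial.taylor 1 T').coeff k = f ((Polynomial.taylor 1 T).coeff k) := by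
    rw [htay, Polynomial.coeff_map]
  have h2 : (Polynomial.taylor 1 T').coeff k * (β - 1) ^ k
      = f ((p : ℤ) ^ k * ((Polynomial.taylor 1 T).coeff k)) * δ ^ k := by
    rw [hco, hδ, mul_pow, map_mul, map_pow]
    simp only [map_natCast]
    ring
  rw [h2]
  exact dvd_mul_of_dvd_left (_root_.map_dvd f (Finset.gcd_dvd hk)) _

lemma circle_eq_sphere : {z : ℂ | ‖z‖ = 1} = Metric.sphere (0 : ℂ) 1 := by
  ext z; simp [Complex.dist_eq]

lemma circle_infinite : Set.Infinite {z : ℂ | ‖z‖ = 1} := by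
  have hinj : Set.InjOn (fun t : ℝ => Complex.exp (t * Complex.I))
      (Set.Ico 0 (2 * Real.pi)) := by
    intro s hs t ht h
    have h' : Complex.exp ((s:ℝ) * Complex.I) = Complex.exp ((t:ℝ) * Complex.I) := h
    have hexp : Complex.exp ((s : ℂ) * Complex.I - (t : ℂ) * Complex.I) = 1 := by
      rw [Complex.exp_sub, h', div_self (Complex.exp_ne_zero _)]
    rw [Complex.exp_eq_one_iff] at hexp
    obtain ⟨n, hn⟩ := hexp
    have hn' : ((s - t : ℝ) : ℂ) * Complex.I = ((n * (2 * Real.pi) : ℝ) : ℂ) * Complex.I := by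
      push_cast
      linear_combination hn
    have hst : (s - t : ℝ) = n * (2 * Real.pi) :=
      Complex.ofReal_injective (mul_right_cancel₀ Complex.I_ne_zero hn')
    have hn0 : n = 0 := by
      rcases lt_trichotomy n 0 with hlt | heq | hgt
      · have : (n : ℝ) ≤ -1 := by exact_mod_cast Int.le_sub_one_of_lt hlt
        nlinarith [hs.1, hs.2, ht.1, ht.2, Real.pi_pos]
      · exact heq
      · have : (1 : ℝ) ≤ n := by exact_mod_cast hgt
        nlinarith [hs.1, hs.2, ht.1, ht.2, Real.pi_pos]
    rw [hn0] at hst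
    have : s - t = 0 := by simpa using hst
    linarith
  have himg : (fun t : ℝ => Complex.exp (t * Complex.I)) '' (Set.Ico 0 (2 * Real.pi)) ⊆
      {z : ℂ | ‖z‖ = 1} := by
    rintro z ⟨t, _, rfl⟩
    exact Complex.norm_exp_ofReal_mul_I t
  exact Set.Infinite.mono himg
    ((Set.Ico_infinite (by positivity)).image hinj)

lemma circle_sup_bddAbove (Q : Polynomial ℂ) :
    BddAbove ((fun z => ‖Q.eval z‖) '' {z : ℂ | ‖z‖ = 1}) := by
  rw [circle_eq_sphere]
  exact ((isCompact_sphere (0:ℂ) 1).image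
    (continuous_norm.comp (Polynomial.continuous Q))).bddAbove

lemma le_circle_sup (Q : Polynomial ℂ) {z : ℂ} (hz : ‖z‖ = 1) :
    ‖Q.eval z‖ ≤
      sSup ((fun z => ‖Q.eval z‖) '' {z : ℂ | ‖z‖ = 1}) :=
  le_csSup (circle_sup_bddAbove Q) (Set.mem_image_of_mem _ hz)

lemma circle_sup_pos (Q : Polynomial ℂ) (hQ : Q ≠ 0) :
    0 < sSup ((fun z => ‖Q.eval z‖) '' {z : ℂ | ‖z‖ = 1}) := by
  obtain ⟨z, hz, hz2⟩ := circle_infinite.exists_notMem_finset Q.roots.toFinset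
  have hzne : Q.eval z ≠ 0 := by
    intro h
    exact hz2 (Multiset.mem_toFinset.mpr ((Polynomial.mem_roots hQ).mpr h))
  calc (0:ℝ) < ‖Q.eval z‖ := norm_pos_iff.mpr hzne
    _ ≤ _ := le_circle_sup Q hz

lemma max_one_pow {a : ℝ} (ha : 0 ≤ a) (k : ℕ) : max 1 (a ^ k) = (max 1 a) ^ k := by
  rcases le_total a 1 with h | h
  · rw [max_eq_left (pow_le_one₀ ha h), max_eq_left h, one_pow]
  · rw [max_eq_right (one_le_pow₀ h), max_eq_right h]

lemma place_bound (T : Polynomial ℤ) (w : InfinitePlace K) (x : K) :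
    w ((T.map (Int.castRingHom K)).eval x) ≤
      sSup ((fun z => ‖(T.map (Int.castRingHom ℂ)).eval z‖) ''
        {z : ℂ | ‖z‖ = 1}) * max 1 (w x) ^ T.natDegree := by
  set Tc := T.map (Int.castRingHom ℂ) with hTc
  have hdeg : Tc.natDegree = T.natDegree :=
    Polynomial.natDegree_map_eq_of_injective Int.cast_injective T
  have hcomm : w.embedding ((T.map (Int.castRingHom K)).eval x) = Tc.eval (w.embedding x) := by
    rw [Polynomial.eval_map, Polynomial.hom_eval₂, ← Polynomial.eval_map, hTc]
    congr 1
    rw [RingHom.eq_intCast' (w.embedding.comp (Int.castRingHom K))]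
  have h1 : w ((T.map (Int.castRingHom K)).eval x) = ‖Tc.eval (w.embedding x)‖ := by
    rw [← InfinitePlace.norm_embedding_eq, hcomm]
  have h2 : w x = ‖w.embedding x‖ := by
    rw [← InfinitePlace.norm_embedding_eq]
  rw [h1, h2, ← hdeg]
  exact poly_global_bound Tc (fun z hz => le_circle_sup Tc hz) _

set_option maxHeartbeats 1000000 in
/-- If `α` is a totally `p`-adic algebraic unit (every prime of `K = ℚ(α)` above `p` has
ramification index and residue degree `1`) and `T ∈ ℤ[x]` satisfies `T(α^{p-1}) ≠ 0`,
then `h(α) ≥ (ω_p(T) - ν_∞(T)) / ((p-1)·deg T)`. -/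
theorem height_totally_padic_unit (p : ℕ) (hp : p.Prime) (α : 𝓞 K)
    (hgen : Algebra.adjoin ℚ {(algebraMap (𝓞 K) K α)} = ⊤)
    (hunit : IsUnit α)
    (hsplit : ∀ v : HeightOneSpectrum (𝓞 K), v.asIdeal ∣ Ideal.span {(p : 𝓞 K)} →
      Ideal.absNorm v.asIdeal = p ∧ ¬ (v.asIdeal ^ 2 ∣ Ideal.span {(p : 𝓞 K)}))
    (T : Polynomial ℤ)
    (hT : (T.map (Int.castRingHom K)).eval ((algebraMap (𝓞 K) K α) ^ (p - 1)) ≠ 0) :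
    weilHeight (algebraMap (𝓞 K) K α) ≥
      (omegap p T - nuC (T.map (Int.castRingHom ℂ))) / (((p : ℝ) - 1) * T.natDegree) := by
  set n : ℕ := Module.finrank ℚ K with hn
  have hnpos : 0 < n := Module.finrank_pos
  have hnR : (0:ℝ) < n := by exact_mod_cast hnpos
  set αK : K := algebraMap (𝓞 K) K α with hαK
  set d := T.natDegree with hd
  have hT0 : T ≠ 0 := by
    rintro rfl
    simp at hT
  -- γ and its image in K
  set γ : 𝓞 K := (T.map (Int.castRingHom (𝓞 K))).eval (α ^ (p - 1)) with hγ
  have hγK : algebraMap (𝓞 K) K γ = (T.map (Int.castRingHom K)).eval (αK ^ (p - 1)) := by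
    rw [hγ, Polynomial.eval_map, Polynomial.hom_eval₂, ← Polynomial.eval_map, map_pow, hαK]
    congr 2
  have hγKne : algebraMap (𝓞 K) K γ ≠ 0 := by rw [hγK]; exact hT
  have hγ0 : γ ≠ 0 := by
    intro h; exact hγKne (by rw [h, map_zero])
  -- gcd
  set g : ℤ := (Finset.range (T.natDegree + 1)).gcd
    (fun k => (p : ℤ) ^ k * ((Polynomial.taylor 1 T).coeff k)) with hg
  have hgne : g ≠ 0 := by
    intro h0
    rw [hg, Finset.gcd_eq_zero_iff] at h0
    have htay0 : Polynomial.taylor 1 T = 0 := by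
      ext k
      rcases lt_or_ge k (T.natDegree + 1) with hk | hk
      · have := h0 k (Finset.mem_range.mpr hk)
        have hp0 : ((p:ℤ)) ^ k ≠ 0 := pow_ne_zero _ (by exact_mod_cast hp.ne_zero)
        simpa [hp0] using this
      · have : (Polynomial.taylor 1 T).natDegree < k := by
          rw [Polynomial.natDegree_taylor]; omega
        simp [Polynomial.coeff_eq_zero_of_natDegree_lt this]
    have hT0' : T = 0 := by
      have h2 := congrArg (Polynomial.taylor (-1)) htay0
      rwa [Polynomial.taylor_taylor, neg_add_cancel, Polynomial.taylor_zero, map_zero] at h2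
    exact hT0 hT0'
  have hgnonneg : 0 ≤ g := by
    have := Finset.normalize_gcd (s := Finset.range (T.natDegree + 1))
      (f := fun k => (p : ℤ) ^ k * ((Polynomial.taylor 1 T).coeff k))
    rw [← hg] at this
    rw [← this]
    rw [← Int.abs_eq_normalize]
    exact abs_nonneg _
  have hgpos : 0 < g := lt_of_le_of_ne hgnonneg (Ne.symm hgne)
  have hgR : (0:ℝ) < (g:ℝ) := by exact_mod_cast hgpos
  -- divisibility and norm bound
  have hpdvd : (p : 𝓞 K) ∣ α ^ (p - 1) - 1 := p_dvd_lemma p hp α hunit hsplit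
  have hgdvd : ((g : ℤ) : 𝓞 K) ∣ γ := by
    rw [hγ, hg]; exact gcd_dvd_eval p T (α ^ (p - 1)) hpdvd
  obtain ⟨δ, hδ⟩ := hgdvd
  have hδ0 : δ ≠ 0 := by
    rintro rfl
    rw [mul_zero] at hδ
    exact hγ0 hδ
  have hnorm : ((g:ℝ)) ^ n ≤ ∏ w : InfinitePlace K, w (algebraMap (𝓞 K) K γ) ^ w.mult := by
    rw [NumberField.InfinitePlace.prod_eq_abs_norm]
    have hfac : (algebraMap (𝓞 K) K) γ = (algebraMap ℚ K (g:ℚ)) * (algebraMap (𝓞 K) K δ) := by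
      rw [hδ, map_mul]
      congr 1
      simp [map_intCast]
    have h1 : (1:ℚ) ≤ |Algebra.norm ℚ (algebraMap (𝓞 K) K δ)| := by
      have hnz : Algebra.norm ℤ δ ≠ 0 := Algebra.norm_ne_zero_iff.mpr hδ0
      have : ((Algebra.norm ℤ δ : ℤ) : ℚ) = Algebra.norm ℚ (algebraMap (𝓞 K) K δ) :=
        Algebra.coe_norm_int δ
      rw [← this, ← Int.cast_abs]
      exact_mod_cast Int.one_le_abs hnz
    have h2 : |Algebra.norm ℚ ((algebraMap (𝓞 K) K) γ)| = (g:ℚ) ^ n * |Algebra.norm ℚ (algebraMap (𝓞 K) K δ)| := by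
      rw [hfac, map_mul, abs_mul, Algebra.norm_algebraMap, abs_pow, abs_of_nonneg (by exact_mod_cast hgnonneg : (0:ℚ) ≤ (g:ℚ))]
    have h3 : (g:ℚ) ^ n ≤ |Algebra.norm ℚ ((algebraMap (𝓞 K) K) γ)| := by
      rw [h2]
      nlinarith [pow_nonneg (by exact_mod_cast hgnonneg : (0:ℚ) ≤ (g:ℚ)) n]
    exact_mod_cast h3
  -- setup the sup norm
  set S : ℝ := sSup ((fun z => ‖(T.map (Int.castRingHom ℂ)).eval z‖) ''
    {z : ℂ | ‖z‖ = 1}) with hS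
  have hTc0 : T.map (Int.castRingHom ℂ) ≠ 0 := fun h =>
    hT0 ((Polynomial.map_injective _ Int.cast_injective) (by rw [h, Polynomial.map_zero]))
  have hSpos : 0 < S := circle_sup_pos _ hTc0
  -- per place bound
  have hplace : ∀ w : InfinitePlace K,
      w (algebraMap (𝓞 K) K γ) ≤ S * max 1 (w αK) ^ ((p - 1) * d) := by
    intro w
    have h1 := place_bound T w (αK ^ (p - 1))
    rw [← hγK] at h1
    have h2 : max 1 (w (αK ^ (p - 1))) ^ T.natDegree = max 1 (w αK) ^ ((p - 1) * d) := by
      rw [map_pow, max_one_pow (apply_nonneg w αK) (p - 1), ← pow_mul]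
    rw [h2] at h1
    rwa [hS]
  -- positivity of w γK
  have hwpos : ∀ w : InfinitePlace K, 0 < w (algebraMap (𝓞 K) K γ) :=
    fun w => NumberField.InfinitePlace.pos_iff.mpr hγKne
  set H : ℝ := ∑ w : InfinitePlace K, (w.mult : ℝ) * Real.log (max 1 (w αK)) with hH
  have hHnonneg : 0 ≤ H := Finset.sum_nonneg (fun w _ =>
    mul_nonneg (by positivity) (Real.log_nonneg (le_max_left _ _)))
  have hcast : (((p - 1) * d : ℕ) : ℝ) = ((p:ℝ) - 1) * d := by
    push_cast [Nat.cast_sub hp.one_le]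
    ring
  have key : (n:ℝ) * Real.log g ≤ (n:ℝ) * Real.log S + (((p:ℝ) - 1) * d) * H := by
    have e1 : (n:ℝ) * Real.log g = Real.log ((g:ℝ) ^ n) := by rw [Real.log_pow]
    have e2 : Real.log ((g:ℝ) ^ n) ≤
        Real.log (∏ w : InfinitePlace K, w (algebraMap (𝓞 K) K γ) ^ w.mult) :=
      Real.log_le_log (by positivity) hnorm
    have e3 : Real.log (∏ w : InfinitePlace K, w (algebraMap (𝓞 K) K γ) ^ w.mult)
        = ∑ w : InfinitePlace K, (w.mult : ℝ) * Real.log (w (algebraMap (𝓞 K) K γ)) := by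
      rw [Real.log_prod (fun w _ => pow_ne_zero _ (hwpos w).ne')]
      exact Finset.sum_congr rfl fun w _ => by rw [Real.log_pow]
    have e4 : ∀ w : InfinitePlace K, Real.log (w (algebraMap (𝓞 K) K γ)) ≤
        Real.log S + ((p:ℝ) - 1) * d * Real.log (max 1 (w αK)) := by
      intro w
      have hmaxpos : (0:ℝ) < max 1 (w αK) ^ ((p - 1) * d) := by positivity
      calc Real.log (w (algebraMap (𝓞 K) K γ))
          ≤ Real.log (S * max 1 (w αK) ^ ((p - 1) * d)) :=
            Real.log_le_log (hwpos w) (hplace w)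
        _ = Real.log S + Real.log (max 1 (w αK) ^ ((p - 1) * d)) :=
            Real.log_mul hSpos.ne' hmaxpos.ne'
        _ = Real.log S + ((p:ℝ) - 1) * d * Real.log (max 1 (w αK)) := by
            rw [Real.log_pow, hcast]
    have e5 : ∑ w : InfinitePlace K, (w.mult : ℝ) * Real.log (w (algebraMap (𝓞 K) K γ))
        ≤ ∑ w : InfinitePlace K, (w.mult : ℝ) *
          (Real.log S + ((p:ℝ) - 1) * d * Real.log (max 1 (w αK))) :=
      Finset.sum_le_sum fun w _ => mul_le_mul_of_nonneg_left (e4 w) (by positivity)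
    have hsum : ∑ w : InfinitePlace K, (w.mult : ℝ) = (n : ℝ) := by
      rw [hn]
      exact_mod_cast congrArg (Nat.cast (R := ℝ)) (NumberField.InfinitePlace.sum_mult_eq (K := K))
    have e6 : ∑ w : InfinitePlace K, (w.mult : ℝ) *
        (Real.log S + ((p:ℝ) - 1) * d * Real.log (max 1 (w αK)))
        = (n:ℝ) * Real.log S + (((p:ℝ) - 1) * d) * H := by
      simp only [mul_add]
      rw [Finset.sum_add_distrib]
      congr 1
      · rw [← Finset.sum_mul, hsum]
      · rw [hH, Finset.mul_sum]
        exact Finset.sum_congr rfl fun w _ => by ring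
    calc (n:ℝ) * Real.log g = Real.log ((g:ℝ) ^ n) := e1
      _ ≤ Real.log (∏ w : InfinitePlace K, w (algebraMap (𝓞 K) K γ) ^ w.mult) := e2
      _ = ∑ w : InfinitePlace K, (w.mult : ℝ) * Real.log (w (algebraMap (𝓞 K) K γ)) := e3
      _ ≤ _ := e5
      _ = _ := e6
  -- the height of a unit has no finite part
  have hfin : ∑ᶠ v : HeightOneSpectrum (𝓞 K), Real.log (max 1 (padicAbs v αK)) = 0 := by
    have hz : ∀ v : HeightOneSpectrum (𝓞 K), Real.log (max 1 (padicAbs v αK)) = 0 := by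
      intro v
      rw [hαK, padicAbs_unit_eq_one α hunit v]
      simp
    calc ∑ᶠ v : HeightOneSpectrum (𝓞 K), Real.log (max 1 (padicAbs v αK))
        = ∑ᶠ _ : HeightOneSpectrum (𝓞 K), (0:ℝ) := finsum_congr hz
      _ = 0 := finsum_zero
  have hWH : weilHeight αK = (1/(n:ℝ)) * H := by
    rw [weilHeight, hfin, add_zero, hH, hn]
  rw [hWH, ge_iff_le]
  have hωeq : omegap p T = Real.log (g:ℝ) := by rw [omegap, hg]
  have hνeq : nuC (T.map (Int.castRingHom ℂ)) = Real.log S := by rw [nuC, hS]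
  rw [hωeq, hνeq]
  rcases Nat.eq_zero_or_pos d with hd0 | hdpos
  · rw [hd0]
    simp only [Nat.cast_zero, mul_zero, div_zero]
    have : (0:ℝ) ≤ 1/(n:ℝ) := by positivity
    exact mul_nonneg this hHnonneg
  · have hD : (0:ℝ) < ((p:ℝ) - 1) * d := by
      have h2p : (2:ℝ) ≤ p := by exact_mod_cast hp.two_le
      have hdR : (0:ℝ) < d := by exact_mod_cast hdpos
      nlinarith
    rw [div_le_iff₀ hD]
    have h7 : (Real.log g - Real.log S) * n ≤ (((p:ℝ) - 1) * d) * H := by nlinarith [key]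
    calc Real.log g - Real.log S = ((Real.log g - Real.log S) * n) / n := by field_simp
      _ ≤ ((((p:ℝ) - 1) * d) * H) / n := (div_le_div_iff_of_pos_right hnR).mpr h7
      _ ≤ 1/(n:ℝ) * H * (((p:ℝ) - 1) * d) := by rw [div_eq_mul_inv]; ring_nf; exact le_refl _
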